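/- Let R be a commutative ring of characteristic 0 with fraction field K, and let f(x) = x·Σ_{k≥0} (a_k/k!) x^k ∈ K[[x]] with a_0 = 1 and a_k ∈ R for all k. Then the compositional inverse f^{-1}(x) ∈ x + x²K[[x]] is also of the form x·Σ_{k≥0} (b_k/k!) x^k with b_0 = 1 and b_k ∈ R for all k. -/

import Mathlib

/-- Composition `f(g(x))` of formal power series, intended for `g` with zero
constant coefficient. -/
noncomputable def PowerSeries.comp {K : Type*} [CommSemiring K] (f g : PowerSeries K) :
    PowerSeries K :=
  PowerSeries.mk fun n =>
    PowerSeries.coeff n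
      (∑ k ∈ Finset.range (n + 1), PowerSeries.C (PowerSeries.coeff k f) * g ^ k)

private lemma hurwitz_mul {R K : Type*} [CommRing R] [Field K] [Algebra R K]
    (N : ℕ) (U V : PowerSeries K)
    (hU : ∀ m, ∃ c : R, m < N →
      (m.factorial : K) * PowerSeries.coeff m U = algebraMap R K c)
    (hV : ∀ m, ∃ c : R, m < N →
      (m.factorial : K) * PowerSeries.coeff m V = algebraMap R K c) :
    ∀ m, ∃ c : R, m < N →
      (m.factorial : K) * PowerSeries.coeff m (U * V) = algebraMap R K c := by
  choose cU hcU using hU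
  choose cV hcV using hV
  intro m
  refine ⟨∑ p ∈ Finset.HasAntidiagonal.antidiagonal m, ((m.choose p.1 : R) * (cU p.1 * cV p.2)),
    fun hm => ?_⟩
  rw [PowerSeries.coeff_mul, Finset.mul_sum, map_sum]
  refine Finset.sum_congr rfl fun p hp => ?_
  obtain ⟨i, j⟩ := p
  have hpm : i + j = m := Finset.HasAntidiagonal.mem_antidiagonal.mp hp
  subst hpm
  have h1 : i < N := lt_of_le_of_lt (Nat.le_add_right i j) hm
  have h2 : j < N := lt_of_le_of_lt (Nat.le_add_left j i) hm
  have hfact : ((i + j).factorial : K)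
      = ((i + j).choose i : K) * (i.factorial : K) * (j.factorial : K) := by
    have := Nat.choose_mul_factorial_mul_factorial (Nat.le_add_right i j)
    have hij : i + j - i = j := by omega
    rw [hij] at this
    rw [← this]
    push_cast
    ring
  have := hcU i h1
  have := hcV j h2
  calc ((i + j).factorial : K) * (PowerSeries.coeff i U * PowerSeries.coeff j V)
      = ((i + j).choose i : K) *
        (((i.factorial : K) * PowerSeries.coeff i U) *
          ((j.factorial : K) * PowerSeries.coeff j V)) := by rw [hfact]; ring
    _ = ((i + j).choose i : K) * (algebraMap R K (cU i) * algebraMap R K (cV j)) := by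
        rw [hcU i h1, hcV j h2]
    _ = algebraMap R K ((((i + j).choose i : R)) * (cU i * cV j)) := by
        rw [map_mul, map_mul, map_natCast]

private lemma hurwitz_pow {R K : Type*} [CommRing R] [Field K] [Algebra R K]
    (N : ℕ) (U : PowerSeries K)
    (hU : ∀ m, ∃ c : R, m < N →
      (m.factorial : K) * PowerSeries.coeff m U = algebraMap R K c) :
    ∀ p : ℕ, ∀ m, ∃ c : R, m < N →
      (m.factorial : K) * PowerSeries.coeff m (U ^ p) = algebraMap R K c := by
  intro p
  induction p with
  | zero =>
    intro m
    refine ⟨if m = 0 then 1 else 0, fun _ => ?_⟩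
    rcases eq_or_ne m 0 with rfl | hm
    · simp
    · simp [PowerSeries.coeff_one, hm]
  | succ p ih =>
    have := hurwitz_mul N (U ^ p) U ih hU
    simpa [pow_succ] using this

theorem inverse_of_factorial_type {R K : Type*} [CommRing R] [CharZero R]
    [Field K] [Algebra R K] [IsFractionRing R K]
    (f : PowerSeries K) (hf0 : PowerSeries.coeff 0 f = 0)
    (a : ℕ → R) (ha0 : a 0 = 1)
    (ha : ∀ k, PowerSeries.coeff (k + 1) f
      = algebraMap R K (a k) / (Nat.factorial k : K))
    (g : PowerSeries K) (hg0 : PowerSeries.coeff 0 g = 0)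
    (hg1 : PowerSeries.coeff 1 g = 1)
    (hginv : f.comp g = PowerSeries.X) :
    ∃ b : ℕ → R, b 0 = 1 ∧ ∀ k,
      PowerSeries.coeff (k + 1) g = algebraMap R K (b k) / (Nat.factorial k : K) := by
  have inj := IsFractionRing.injective R K
  haveI : CharZero K := charZero_of_injective_algebraMap inj
  have factK : ∀ k : ℕ, (k.factorial : K) ≠ 0 :=
    fun k => Nat.cast_ne_zero.mpr k.factorial_ne_zero
  set u : PowerSeries K := PowerSeries.mk fun m => PowerSeries.coeff (m + 1) g with hu
  have hgu : g = PowerSeries.X * u := by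
    ext n
    cases n with
    | zero =>
      rw [PowerSeries.coeff_zero_eq_constantCoeff] at hg0 ⊢
      simp [hg0]
    | succ n => rw [PowerSeries.coeff_succ_X_mul, hu, PowerSeries.coeff_mk]
  have key : ∀ n : ℕ, ∃ r : R,
      PowerSeries.coeff (n + 1) g = algebraMap R K r / (n.factorial : K) := by
    intro n
    induction n using Nat.strong_induction_on with
    | _ n IH =>
    cases n with
    | zero => exact ⟨1, by simp [hg1]⟩
    | succ m =>
      -- Hurwitz property of u below m+1
      have hUu : ∀ l, ∃ c : R, l < m + 1 →
          (l.factorial : K) * PowerSeries.coeff l u = algebraMap R K c := by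
        intro l
        by_cases hl : l < m + 1
        · obtain ⟨r, hr⟩ := IH l hl
          refine ⟨r, fun _ => ?_⟩
          rw [hu, PowerSeries.coeff_mk, hr]
          exact mul_div_cancel₀ _ (factK l)
        · exact ⟨0, fun h => absurd h hl⟩
      have hpow := hurwitz_pow (m + 1) u hUu
      choose c hc using fun k => hpow (k + 2) (m - k)
      -- coefficient equation from f.comp g = X
      have hco : PowerSeries.coeff (m + 2) (f.comp g) = 0 := by
        rw [hginv, PowerSeries.coeff_X]
        simp
      simp only [PowerSeries.comp, PowerSeries.coeff_mk, map_sum,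
        PowerSeries.coeff_C_mul] at hco
      rw [Finset.sum_range_succ', hf0, zero_mul, add_zero] at hco
      rw [Finset.sum_range_succ', pow_one, ha 0, ha0, map_one] at hco
      norm_num [Nat.factorial] at hco
      -- hco : (∑ k ∈ range (m+1), coeff (k+1+1) f * coeff (m+2) (g^(k+1+1)))
      --        + coeff (m+2) g = 0
      have hcoeff : PowerSeries.coeff (m + 2) g
          = -∑ k ∈ Finset.range (m + 1),
              PowerSeries.coeff (k + 1 + 1) f *
                PowerSeries.coeff (m + 2) (g ^ (k + 1 + 1)) :=
        eq_neg_of_add_eq_zero_right hco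
      have hterm : ∀ k ∈ Finset.range (m + 1),
          PowerSeries.coeff (k + 1 + 1) f *
              PowerSeries.coeff (m + 2) (g ^ (k + 1 + 1))
            = algebraMap R K (((m + 1).choose (k + 1) : R) * (a (k + 1) * c k))
                / ((m + 1).factorial : K) := by
        intro k hk
        have hkm : k ≤ m := Nat.lt_succ_iff.mp (Finset.mem_range.mp hk)
        have hgpow : PowerSeries.coeff (m + 2) (g ^ (k + 1 + 1))
            = algebraMap R K (c k) / ((m - k).factorial : K) := by
          have h1 : m + 2 = (m - k) + (k + 2) := by omega
          rw [hgu, mul_pow, h1]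
          rw [PowerSeries.coeff_X_pow_mul]
          have h2 := hc k (by omega)
          rw [eq_div_iff (factK _), mul_comm]
          exact h2
        rw [ha (k + 1), hgpow]
        have hfact : ((m + 1).factorial : K)
            = ((m + 1).choose (k + 1) : K) * ((k + 1).factorial : K)
              * ((m - k).factorial : K) := by
          have := Nat.choose_mul_factorial_mul_factorial
            (show k + 1 ≤ m + 1 by omega)
          have hmk : m + 1 - (k + 1) = m - k := by omega
          rw [hmk] at this
          exact_mod_cast this.symm
        rw [map_mul, map_mul, map_natCast, hfact]
        have hch : (((m + 1).choose (k + 1) : K)) ≠ 0 :=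
          Nat.cast_ne_zero.mpr (Nat.choose_pos (by omega)).ne'
        rw [mul_assoc, mul_div_mul_left _ _ hch, div_mul_div_comm]
      rw [Finset.sum_congr rfl hterm] at hcoeff
      refine ⟨-∑ k ∈ Finset.range (m + 1),
        (((m + 1).choose (k + 1) : R) * (a (k + 1) * c k)), ?_⟩
      rw [hcoeff, ← Finset.sum_div, ← map_sum, map_neg, neg_div]
  choose b hb using key
  refine ⟨b, ?_, hb⟩
  have h0 := hb 0
  rw [hg1] at h0
  norm_num [Nat.factorial] at h0
  exact inj (by rw [map_one, ← h0])
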